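/- Let (G,X) be a G-system, x ∈ X, and F = (F_n)_{n∈D} a Følner net in G. Suppose C_F(x) is S-generic (there exists z ∈ C_F(x) with C_F(z) = C_F(x)) and C_F(x) is not a minimal subset of (G,X). Let S_x = {y ∈ C_F(x) : C_F(y) = C_F(x)}. Then for every y ∈ S_x and every minimal subset Δ ⊆ C_F(x), there exists z ∈ Δ such that the pair {y,z} is Li–Yorke chaotic for (G,X) and there exist sequences (t_n) and (s_n) in G with lim_n d(s_n y, z) = 0 and liminf_n d(t_n y, z) ≥ (1/2)·diam(C_F(x)), where diam denotes the diameter. Moreover, if G is commutative, then S_x is dense in C_F(x). -/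

import Mathlib

open Filter Metric Set

section Defs

variable {G : Type*} [Group G] [DecidableEq G]
variable {D : Type*} [Preorder D]

/-- `F` is a (left) Følner net in `G`. -/
def IsFolnerNet (F : D → Finset G) : Prop :=
  (∀ n, (F n).Nonempty) ∧
    ∀ g : G,
      Tendsto (fun n : D =>
          ((symmDiff ((F n).image fun h => g * h) (F n)).card : ℝ) / (F n).card)
        atTop (nhds 0)

/-- Upper density of `A ⊆ G` relative to the net `F`. -/
noncomputable def upperDensity (F : D → Finset G) (A : Set G) : ℝ :=
  sSup {α : ℝ | ∀ m : D, ∃ n : D, m ≤ n ∧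
    α ≤ (((F n : Set G) ∩ A).ncard : ℝ) / (F n).card}

variable {X : Type*} [MetricSpace X] [MulAction G X]

/-- The minimal `F`-center of attraction of `x`. -/
def minCenter (F : D → Finset G) (x : X) : Set X :=
  {y : X | ∀ U : Set X, IsOpen U → y ∈ U → 0 < upperDensity F {g : G | g • x ∈ U}}

end Defs

/-- `Λ` is a minimal subset of the `G`-system: nonempty, closed, `G`-invariant, and containing
no nonempty proper closed `G`-invariant subset. -/
def IsMinimalSubset (G : Type*) [Group G] {X : Type*} [MetricSpace X] [MulAction G X]
    (Λ : Set X) : Prop :=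
  Λ.Nonempty ∧ IsClosed Λ ∧ (∀ g : G, ∀ z ∈ Λ, g • z ∈ Λ) ∧
    ∀ Λ' ⊆ Λ, Λ'.Nonempty → IsClosed Λ' → (∀ g : G, ∀ z ∈ Λ', g • z ∈ Λ') → Λ' = Λ

/-- The pair `{x, y}` is proximal. -/
def IsProximalPair (G : Type*) [Group G] {X : Type*} [MetricSpace X] [MulAction G X]
    (x y : X) : Prop :=
  ∃ t : ℕ → G, Tendsto (fun n => dist ((t n) • x) ((t n) • y)) atTop (nhds 0)

/-- The pair `{x, y}` is asymptotic. -/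
def IsAsymptoticPair (G : Type*) [Group G] {X : Type*} [MetricSpace X] [MulAction G X]
    (x y : X) : Prop :=
  ∀ ε : ℝ, 0 < ε → ∃ F : Finset G, ∀ g : G, g ∉ F → dist (g • x) (g • y) < ε

set_option linter.unusedSectionVars false

section Dens
variable {G : Type*} [Group G] [DecidableEq G]
variable {D : Type*} [Preorder D] [IsDirected D (· ≤ ·)] [Nonempty D]

private def dSet (F : D → Finset G) (A : Set G) : Set ℝ :=
  {α : ℝ | ∀ m : D, ∃ n : D, m ≤ n ∧ α ≤ (((F n : Set G) ∩ A).ncard : ℝ) / (F n).card}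

private lemma upperDensity_def (F : D → Finset G) (A : Set G) :
    upperDensity F A = sSup (dSet F A) := rfl

private lemma dSet_frequently {F : D → Finset G} {A : Set G} {α : ℝ} :
    α ∈ dSet F A ↔ ∃ᶠ n in (atTop : Filter D),
      α ≤ (((F n : Set G) ∩ A).ncard : ℝ) / (F n).card := by
  rw [frequently_atTop]; rfl

private lemma dSet_zero_mem (F : D → Finset G) (A : Set G) : (0:ℝ) ∈ dSet F A :=
  fun m => ⟨m, le_refl m, by positivity⟩

private lemma ratio_le_one {F : D → Finset G} (hne : ∀ n, (F n).Nonempty) (A : Set G) (n : D) :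
    (((F n : Set G) ∩ A).ncard : ℝ) / (F n).card ≤ 1 := by
  rw [div_le_one (by exact_mod_cast (hne n).card_pos)]
  exact_mod_cast (Set.ncard_coe_finset (F n)) ▸
    Set.ncard_le_ncard inter_subset_left (F n).finite_toSet

private lemma dSet_bddAbove {F : D → Finset G} (hne : ∀ n, (F n).Nonempty) (A : Set G) :
    BddAbove (dSet F A) := by
  refine ⟨1, fun α hα => ?_⟩
  obtain ⟨n, -, h⟩ := hα (Classical.arbitrary D)
  exact h.trans (ratio_le_one hne A n)

private lemma nonempty_of_upperDensity_pos {F : D → Finset G} {A : Set G}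
    (h : 0 < upperDensity F A) : A.Nonempty := by
  rw [Set.nonempty_iff_ne_empty]
  rintro rfl
  refine absurd h (not_lt.2 ?_)
  rw [upperDensity_def]
  refine csSup_le ⟨0, dSet_zero_mem F ∅⟩ fun α hα => ?_
  obtain ⟨n, -, h⟩ := hα (Classical.arbitrary D)
  simpa using h
end Dens
section Dens2
set_option linter.unusedSectionVars false
variable {G : Type*} [Group G] [Infinite G] [DecidableEq G]
variable {D : Type*} [Preorder D] [IsDirected D (· ≤ ·)] [Nonempty D]

private lemma folner_card_large {F : D → Finset G} (hFol : IsFolnerNet F) (N : ℕ) :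
    ∀ᶠ n in (atTop : Filter D), N ≤ (F n).card := by
  rcases Nat.eq_zero_or_pos N with rfl | hN
  · exact Filter.Eventually.of_forall fun n => Nat.zero_le _
  set K : Finset G := (Finset.range N).map (Infinite.natEmbedding G) with hK
  have hKcard : K.card = N := by simp [hK]
  have hKne : K.Nonempty := by
    rw [← Finset.card_pos, hKcard]; exact hN
  have hsmall : ∀ᶠ n in (atTop : Filter D), ∀ k ∈ K,
      ((symmDiff ((F n).image fun h => k * h) (F n)).card : ℝ) / (F n).card < 1/N := by
    rw [Filter.eventually_all_finset]
    intro k _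
    exact (hFol.2 k).eventually_lt_const (by positivity)
  filter_upwards [hsmall] with n hn
  have cardpos : (0:ℝ) < (F n).card := by exact_mod_cast (hFol.1 n).card_pos
  have hBk : ∀ k ∈ K, ((F n \ (F n).image fun h => k * h).card : ℝ) < (F n).card / N := by
    intro k hk
    have hsub : F n \ ((F n).image fun h => k * h) ⊆
        symmDiff ((F n).image fun h => k * h) (F n) := by
      intro a ha; rw [Finset.mem_symmDiff]
      rw [Finset.mem_sdiff] at ha
      exact Or.inr ⟨ha.1, ha.2⟩
    have h1 : ((F n \ (F n).image fun h => k * h).card : ℝ) ≤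
        ((symmDiff ((F n).image fun h => k * h) (F n)).card : ℝ) := by
      exact_mod_cast Finset.card_le_card hsub
    have h2 := hn k hk
    rw [div_lt_iff₀ cardpos] at h2
    calc ((F n \ (F n).image fun h => k * h).card : ℝ) ≤ _ := h1
      _ < 1/N * (F n).card := h2
      _ = (F n).card / N := by ring
  set Bad : Finset G := K.biUnion (fun k => F n \ (F n).image fun h => k * h) with hBad
  have hBadcard : (Bad.card : ℝ) < (F n).card := by
    have h1 : (Bad.card : ℝ) ≤ ∑ k ∈ K, ((F n \ (F n).image fun h => k * h).card : ℝ) := by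
      exact_mod_cast Finset.card_biUnion_le
    have h2 : ∑ k ∈ K, ((F n \ (F n).image fun h => k * h).card : ℝ) <
        ∑ _k ∈ K, ((F n).card : ℝ) / N := Finset.sum_lt_sum_of_nonempty hKne hBk
    have h3 : ∑ _k ∈ K, ((F n).card : ℝ) / N = (F n).card := by
      rw [Finset.sum_const, hKcard, nsmul_eq_mul]
      field_simp
    linarith
  have hnotsub : ¬ F n ⊆ Bad := by
    intro hsub
    exact absurd (Nat.cast_le.2 (Finset.card_le_card hsub)) (not_le.2 hBadcard)
  obtain ⟨a, haF, haBad⟩ := Finset.not_subset.1 hnotsub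
  have key : ∀ k ∈ K, k⁻¹ * a ∈ F n := by
    intro k hk
    have : a ∉ F n \ (F n).image fun h => k * h := fun hmem =>
      haBad (Finset.mem_biUnion.2 ⟨k, hk, hmem⟩)
    rw [Finset.mem_sdiff] at this
    push_neg at this
    obtain ⟨b, hb, hba⟩ := Finset.mem_image.1 (this haF)
    rwa [← hba, inv_mul_cancel_left]
  calc N = K.card := hKcard.symm
    _ ≤ (F n).card := Finset.card_le_card_of_injOn (fun k => k⁻¹ * a) key
        (fun k₁ _ k₂ _ h => by
          have := mul_right_cancel h
          exact inv_injective this)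

private lemma infinite_of_upperDensity_pos {F : D → Finset G} (hFol : IsFolnerNet F) {A : Set G}
    (h : 0 < upperDensity F A) : A.Infinite := by
  by_contra hninf
  have hfin : A.Finite := Set.not_infinite.1 hninf
  refine absurd h (not_lt.2 ?_)
  rw [upperDensity_def]
  refine csSup_le ⟨0, dSet_zero_mem F A⟩ fun α hα => ?_
  by_contra hpos
  push_neg at hpos
  have hfreq := dSet_frequently.1 hα
  have hev : ∀ᶠ n in (atTop : Filter D),
      (((F n : Set G) ∩ A).ncard : ℝ) / (F n).card < α := by
    filter_upwards [folner_card_large hFol (Nat.ceil ((A.ncard : ℝ) / α) + 1)] with n hcard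
    have cardpos : (0:ℝ) < (F n).card := by exact_mod_cast (hFol.1 n).card_pos
    have h1 : (((F n : Set G) ∩ A).ncard : ℝ) ≤ A.ncard := by
      exact_mod_cast Set.ncard_le_ncard inter_subset_right hfin
    have h2 : (A.ncard : ℝ) / α < (F n).card := by
      have : ((Nat.ceil ((A.ncard : ℝ) / α) + 1 : ℕ) : ℝ) ≤ (F n).card := by
        exact_mod_cast hcard
      have h3 : (A.ncard : ℝ) / α ≤ Nat.ceil ((A.ncard : ℝ) / α) := Nat.le_ceil _
      push_cast at this
      linarith
    rw [div_lt_iff₀ cardpos]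
    rw [div_lt_iff₀ hpos] at h2
    nlinarith
  obtain ⟨n, h1, h2⟩ := (hfreq.and_eventually hev).exists
  linarith
end Dens2
section Dens3
set_option linter.unusedSectionVars false
variable {G : Type*} [Group G] [DecidableEq G]
variable {D : Type*} [Preorder D] [IsDirected D (· ≤ ·)] [Nonempty D]

private lemma upperDensity_le_translate {F : D → Finset G} (hFol : IsFolnerNet F)
    (g : G) (A : Set G) :
    upperDensity F A ≤ upperDensity F ((fun h => g * h) '' A) := by
  have hinj : Function.Injective (fun h : G => g * h) := fun a b hab => by
    simpa using hab
  have key : ∀ n : D, (((F n : Set G) ∩ A).ncard : ℝ) / (F n).card ≤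
      (((F n : Set G) ∩ ((fun h => g * h) '' A)).ncard : ℝ) / (F n).card +
      ((symmDiff ((F n).image fun h => g * h) (F n)).card : ℝ) / (F n).card := by
    intro n
    set SD := symmDiff ((F n).image fun h => g * h) (F n) with hSD
    have himg : (fun h => g * h) '' ((F n : Set G) ∩ A) ⊆
        ((F n : Set G) ∩ ((fun h => g * h) '' A)) ∪ (SD : Set G) := by
      rintro _ ⟨h, ⟨hF, hA⟩, rfl⟩
      by_cases hgh : g * h ∈ F n
      · exact Or.inl ⟨hgh, ⟨h, hA, rfl⟩⟩
      · refine Or.inr ?_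
        rw [Finset.mem_coe, hSD, Finset.mem_symmDiff]
        exact Or.inl ⟨Finset.mem_image.2 ⟨h, hF, rfl⟩, hgh⟩
    have hfin : (((F n : Set G) ∩ ((fun h => g * h) '' A)) ∪ (SD : Set G)).Finite :=
      ((F n).finite_toSet.inter_of_left _).union SD.finite_toSet
    have hcard : (((F n : Set G) ∩ A).ncard : ℝ) ≤
        (((F n : Set G) ∩ ((fun h => g * h) '' A)).ncard : ℝ) + SD.card := by
      have e1 : ((F n : Set G) ∩ A).ncard = ((fun h => g * h) '' ((F n : Set G) ∩ A)).ncard :=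
        (Set.ncard_image_of_injective _ hinj).symm
      have e2 := Set.ncard_le_ncard himg hfin
      have e3 := Set.ncard_union_le ((F n : Set G) ∩ ((fun h => g * h) '' A)) (SD : Set G)
      rw [Set.ncard_coe_finset] at e3
      exact_mod_cast e1 ▸ e2.trans e3
    have cardpos : (0:ℝ) < (F n).card := by exact_mod_cast (hFol.1 n).card_pos
    rw [← add_div]
    gcongr
  rw [upperDensity_def, upperDensity_def]
  refine csSup_le ⟨0, dSet_zero_mem F A⟩ fun α hα => ?_
  refine le_of_forall_pos_le_add fun δ hδ => ?_
  have hev : ∀ᶠ n in (atTop : Filter D),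
      ((symmDiff ((F n).image fun h => g * h) (F n)).card : ℝ) / (F n).card < δ :=
    (hFol.2 g).eventually_lt_const hδ
  have hmem : α - δ ∈ dSet F ((fun h => g * h) '' A) := by
    refine dSet_frequently.2 ?_
    refine ((dSet_frequently.1 hα).and_eventually hev).mono ?_
    rintro n ⟨h1, h2⟩
    have := key n
    linarith
  have := le_csSup (dSet_bddAbove hFol.1 _) hmem
  linarith
end Dens3
section Center
set_option linter.unusedSectionVars false
variable {G : Type*} [Group G] [DecidableEq G]
variable {D : Type*} [Preorder D] [IsDirected D (· ≤ ·)] [Nonempty D]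
variable {X : Type*} [MetricSpace X] [MulAction G X]

private lemma minCenter_isClosed (F : D → Finset G) (x : X) : IsClosed (minCenter F x) := by
  rw [← isOpen_compl_iff, isOpen_iff_mem_nhds]
  intro y hy
  simp only [mem_compl_iff, minCenter, mem_setOf_eq, not_forall] at hy
  obtain ⟨U, hU, hyU, hd⟩ := hy
  refine Filter.mem_of_superset (hU.mem_nhds hyU) fun p hp => ?_
  simp only [mem_compl_iff, minCenter, mem_setOf_eq, not_forall]
  exact ⟨U, hU, hp, hd⟩

private lemma minCenter_subset_closure_orbit (F : D → Finset G) (y : X) :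
    minCenter F y ⊆ closure (Set.range fun g : G => g • y) := by
  intro w hw
  rw [_root_.mem_closure_iff]
  intro O hO hwO
  obtain ⟨g, hg⟩ := nonempty_of_upperDensity_pos (hw O hO hwO)
  exact ⟨g • y, hg, Set.mem_range_self g⟩

private lemma minCenter_smul_mem {F : D → Finset G} (hFol : IsFolnerNet F)
    (hcont : ∀ g : G, Continuous fun y : X => g • y) {x w : X}
    (hw : w ∈ minCenter F x) (g : G) : g • w ∈ minCenter F x := by
  intro U hU hgwU
  have hV : w ∈ (fun p : X => g • p) ⁻¹' U := hgwU
  have hVopen : IsOpen ((fun p : X => g • p) ⁻¹' U) := hU.preimage (hcont g)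
  have hpos := hw _ hVopen hV
  have hset : (fun h : G => g * h) '' {h : G | h • x ∈ (fun p : X => g • p) ⁻¹' U} =
      {h : G | h • x ∈ U} := by
    ext h'
    constructor
    · rintro ⟨h, hh, rfl⟩
      simpa [mul_smul] using hh
    · intro hh'
      exact ⟨g⁻¹ * h', by simpa [mul_smul] using hh', by simp⟩
  have := (upperDensity_le_translate hFol g _).trans_eq (congrArg _ hset)
  linarith
end Center
section Ellis
set_option linter.unusedSectionVars false
set_option maxHeartbeats 1000000
variable {G : Type*} [Group G]
variable {X : Type*} [MetricSpace X] [CompactSpace X] [MulAction G X]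

private lemma exists_proximal_in_minimal
    (hcont : ∀ g : G, Continuous fun y : X => g • y) (y : X) (Δ : Set X)
    (hΔne : Δ.Nonempty) (hΔcl : IsClosed Δ) (hΔinv : ∀ g : G, ∀ z ∈ Δ, g • z ∈ Δ)
    (hΔorb : Δ ⊆ closure (Set.range fun g : G => g • y)) :
    ∃ z ∈ Δ, ∃ t : ℕ → G,
      Filter.Tendsto (fun n => dist ((t n) • y) ((t n) • z)) Filter.atTop (nhds 0) := by
  classical
  letI : Mul (X → X) := ⟨fun f g => f ∘ g⟩
  letI : Semigroup (X → X) := { mul_assoc := fun _ _ _ => rfl }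
  set T : Set (X → X) := Set.range (fun g : G => fun p : X => g • p) with hT
  set E : Set (X → X) := closure T with hE
  have cont_mul_left : ∀ r : X → X, Continuous (· * r) := fun r =>
    continuous_pi fun p => continuous_apply (r p)
  have hEcompact : IsCompact E := isClosed_closure.isCompact
  -- evaluation sends E into orbit closures
  have hEval : ∀ f ∈ E, ∀ w : X, f w ∈ closure (Set.range fun g : G => g • w) := by
    intro f hf w
    have hc : Continuous (fun q : X → X => q w) := continuous_apply w
    have h1 : (fun q : X → X => q w) '' E ⊆ closure ((fun q : X → X => q w) '' T) :=
      image_closure_subset_closure_image hc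
    have h2 : (fun q : X → X => q w) '' T ⊆ Set.range fun g : G => g • w := by
      rintro _ ⟨_, ⟨g, rfl⟩, rfl⟩
      exact ⟨g, rfl⟩
    exact (closure_mono h2) (h1 (Set.mem_image_of_mem _ hf))
  -- E preserves Δ
  have hEΔ : ∀ f ∈ E, ∀ z ∈ Δ, f z ∈ Δ := by
    intro f hf z hz
    refine hΔcl.closure_subset_iff.2 ?_ (hEval f hf z)
    rintro _ ⟨g, rfl⟩
    exact hΔinv g z hz
  -- E is closed under multiplication
  have hEmul : ∀ f ∈ E, ∀ q ∈ E, f * q ∈ E := by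
    have step1 : ∀ g : G, ∀ q ∈ E, ((fun p : X => g • p) : X → X) * q ∈ E := by
      intro g q hq
      have hΨ : Continuous (fun f : X → X => ((fun p : X => g • p) : X → X) * f) :=
        continuous_pi fun p => (hcont g).comp (continuous_apply p)
      have h1 : (fun f : X → X => ((fun p : X => g • p) : X → X) * f) '' E ⊆
          closure ((fun f : X → X => ((fun p : X => g • p) : X → X) * f) '' T) :=
        image_closure_subset_closure_image hΨ
      have h2 : (fun f : X → X => ((fun p : X => g • p) : X → X) * f) '' T ⊆ T := by
        rintro _ ⟨_, ⟨h, rfl⟩, rfl⟩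
        exact ⟨g * h, funext fun p => mul_smul g h p⟩
      exact (closure_mono h2) (h1 (Set.mem_image_of_mem _ hq))
    intro f hf q hq
    have h1 : (fun r : X → X => r * q) '' E ⊆ closure ((fun r : X → X => r * q) '' T) :=
      image_closure_subset_closure_image (cont_mul_left q)
    have h2 : (fun r : X → X => r * q) '' T ⊆ E := by
      rintro _ ⟨_, ⟨g, rfl⟩, rfl⟩
      exact step1 g q hq
    have := (closure_mono h2) (h1 (Set.mem_image_of_mem _ hf))
    rwa [closure_closure] at this
  -- the closed subsemigroup J
  set J : Set (X → X) := E ∩ {f : X → X | f y ∈ Δ} with hJ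
  have hJcl : IsClosed J := isClosed_closure.inter (hΔcl.preimage (continuous_apply y))
  have hJne : J.Nonempty := by
    obtain ⟨z₀, hz₀⟩ := hΔne
    have himg : IsClosed ((fun q : X → X => q y) '' E) :=
      (hEcompact.image (continuous_apply y)).isClosed
    have hsub : Set.range (fun g : G => g • y) ⊆ (fun q : X → X => q y) '' E := by
      rintro _ ⟨g, rfl⟩
      exact ⟨fun p : X => g • p, subset_closure ⟨g, rfl⟩, rfl⟩
    have : z₀ ∈ (fun q : X → X => q y) '' E :=
      (closure_minimal hsub himg) (hΔorb hz₀)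
    obtain ⟨f, hfE, hfy⟩ := this
    exact ⟨f, hfE, by simp [hfy, hz₀]⟩
  have hJmul : ∀ f ∈ J, ∀ q ∈ J, f * q ∈ J :=
    fun f hf q hq => ⟨hEmul f hf.1 q hq.1, hEΔ f hf.1 (q y) hq.2⟩
  obtain ⟨u, huJ, huu⟩ := exists_idempotent_in_compact_subsemigroup cont_mul_left J hJne
    (hJcl.isCompact) hJmul
  refine ⟨u y, huJ.2, ?_⟩
  have hukey : u (u y) = u y := congrFun huu y
  -- extract approximating group elements
  have hgs : ∀ n : ℕ, ∃ g : G, dist (g • y) (u y) < 1 / (n + 1) ∧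
      dist (g • (u y)) (u y) < 1 / (n + 1) := by
    intro n
    have hpos : (0:ℝ) < 1 / (n + 1) := by positivity
    set V : Set (X → X) := {f : X → X | dist (f y) (u y) < 1 / (n + 1) ∧
        dist (f (u y)) (u y) < 1 / (n + 1)} with hV
    have hVopen : IsOpen V := by
      have h1 : IsOpen {f : X → X | dist (f y) (u y) < 1 / (n + 1)} :=
        isOpen_lt ((continuous_apply y).dist continuous_const) continuous_const
      have h2 : IsOpen {f : X → X | dist (f (u y)) (u y) < 1 / (n + 1)} :=
        isOpen_lt ((continuous_apply (u y)).dist continuous_const) continuous_const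
      exact h1.inter h2
    have huV : u ∈ V := by
      constructor
      · simpa using hpos
      · simpa [hukey] using hpos
    have := (_root_.mem_closure_iff.1 huJ.1) V hVopen huV
    obtain ⟨f, hfV, ⟨g, rfl⟩⟩ := this
    exact ⟨g, hfV.1, hfV.2⟩
  choose t ht1 ht2 using hgs
  refine ⟨t, ?_⟩
  have hb : ∀ n : ℕ, dist ((t n) • y) ((t n) • (u y)) ≤ 2 * (1 / (n + 1)) := by
    intro n
    calc dist ((t n) • y) ((t n) • (u y)) ≤
        dist ((t n) • y) (u y) + dist (u y) ((t n) • (u y)) := dist_triangle _ _ _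
      _ ≤ 1 / (n + 1) + 1 / (n + 1) := by
          rw [dist_comm (u y)]
          exact add_le_add (le_of_lt (ht1 n)) (le_of_lt (ht2 n))
      _ = 2 * (1 / (n + 1)) := by ring
  have hlim : Filter.Tendsto (fun n : ℕ => 2 * (1 / ((n : ℝ) + 1))) Filter.atTop (nhds 0) := by
    have := tendsto_one_div_add_atTop_nhds_zero_nat (𝕜 := ℝ)
    simpa using this.const_mul 2
  exact squeeze_zero (fun n => dist_nonneg) hb hlim
end Ellis
set_option maxHeartbeats 1000000 in
/-- Theorem 3.5: Li–Yorke chaotic pairs for an S-generic non-minimal center of attraction;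
moreover if `G` is commutative the set `S_x` is dense in `C_F(x)`. -/
theorem liYorke_of_Sgeneric_nonminimal
    {G : Type*} [Group G] [Infinite G] [DecidableEq G]
    {D : Type*} [Preorder D] [IsDirected D (· ≤ ·)] [Nonempty D]
    {X : Type*} [MetricSpace X] [CompactSpace X] [MulAction G X]
    (hcont : ∀ g : G, Continuous fun y : X => g • y)
    (Fol : D → Finset G) (hFol : IsFolnerNet Fol) (x : X)
    (hS : ∃ z ∈ minCenter Fol x, minCenter Fol z = minCenter Fol x)
    (hnotmin : ¬ IsMinimalSubset G (minCenter Fol x)) :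
    (∀ y ∈ {y : X | y ∈ minCenter Fol x ∧ minCenter Fol y = minCenter Fol x},
      ∀ Δ : Set X, Δ ⊆ minCenter Fol x → IsMinimalSubset G Δ →
        ∃ z ∈ Δ,
          (IsProximalPair G y z ∧ ¬ IsAsymptoticPair G y z) ∧
          (∃ s : ℕ → G, Tendsto (fun n => dist ((s n) • y) z) atTop (nhds 0)) ∧
          (∃ t : ℕ → G,
            (1 / 2) * Metric.diam (minCenter Fol x) ≤
              Filter.liminf (fun n => dist ((t n) • y) z) atTop)) ∧
    ((∀ a b : G, a * b = b * a) →
      minCenter Fol x ⊆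
        closure {y : X | y ∈ minCenter Fol x ∧ minCenter Fol y = minCenter Fol x}) := by
  constructor
  · -- Part 1
    rintro y ⟨hyC, hyc⟩ Δ hΔsub hΔmin
    obtain ⟨hΔne, hΔcl, hΔinv, hΔminimal⟩ := hΔmin
    have horb : minCenter Fol x ⊆ closure (Set.range fun g : G => g • y) := by
      rw [← hyc]; exact minCenter_subset_closure_orbit Fol y
    have hΔorb := hΔsub.trans horb
    obtain ⟨z, hzΔ, t₀, ht₀⟩ := exists_proximal_in_minimal hcont y Δ hΔne hΔcl hΔinv hΔorb
    refine ⟨z, hzΔ, ⟨⟨t₀, ht₀⟩, ?_⟩, ?_, ?_⟩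
    · -- not asymptotic
      intro hasym
      have hne : Δ ≠ minCenter Fol x := by
        rintro rfl; exact hnotmin ⟨hΔne, hΔcl, hΔinv, hΔminimal⟩
      obtain ⟨w', hw'C, hw'Δ⟩ := exists_of_ssubset (ssubset_of_subset_of_ne hΔsub hne)
      obtain ⟨r, hr, hball⟩ := Metric.isOpen_iff.1 hΔcl.isOpen_compl w' hw'Δ
      have hw'y : w' ∈ minCenter Fol y := by rw [hyc]; exact hw'C
      have hApos := hw'y (Metric.ball w' (r/2)) Metric.isOpen_ball
        (Metric.mem_ball_self (by linarith))
      have hAinf := infinite_of_upperDensity_pos hFol hApos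
      obtain ⟨F₀, hF₀⟩ := hasym (r/2) (by linarith)
      obtain ⟨g, hgA, hgF⟩ := hAinf.exists_notMem_finset F₀
      have h1 := hF₀ g hgF
      have h2 : g • z ∈ Δ := hΔinv g z hzΔ
      have h3 : g • z ∉ Metric.ball w' r := fun hmem => (hball hmem) h2
      rw [Metric.mem_ball, not_lt] at h3
      have h4 : dist (g • y) w' < r/2 := by
        have : g • y ∈ Metric.ball w' (r/2) := hgA
        rwa [Metric.mem_ball] at this
      have h5 := dist_triangle (g • z) (g • y) w'
      rw [dist_comm (g • z) (g • y)] at h5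
      linarith
    · -- the sequence s
      have hzcl : z ∈ closure (Set.range fun g : G => g • y) := hΔorb hzΔ
      have hex : ∀ n : ℕ, ∃ g : G, dist (g • y) z < 1/(n+1) := by
        intro n
        obtain ⟨b, hbmem, hbd⟩ := Metric.mem_closure_iff.1 hzcl (1/(n+1)) (by positivity)
        obtain ⟨g, rfl⟩ := hbmem
        exact ⟨g, by rwa [dist_comm]⟩
      choose s hs using hex
      exact ⟨s, squeeze_zero (fun n => dist_nonneg) (fun n => (hs n).le)
        tendsto_one_div_add_atTop_nhds_zero_nat⟩
    · -- the sequence t and the liminf bound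
      have hCcomp : IsCompact (minCenter Fol x) := (minCenter_isClosed Fol x).isCompact
      obtain ⟨w, hwC, hwmax⟩ := hCcomp.exists_isMaxOn ⟨y, hyC⟩
        ((continuous_id.dist (continuous_const : Continuous fun _ : X => z)).continuousOn)
      have hwcl : w ∈ closure (Set.range fun g : G => g • y) := horb hwC
      have hex : ∀ n : ℕ, ∃ g : G, dist (g • y) w < 1/(n+1) := by
        intro n
        obtain ⟨b, hbmem, hbd⟩ := Metric.mem_closure_iff.1 hwcl (1/(n+1)) (by positivity)
        obtain ⟨g, rfl⟩ := hbmem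
        exact ⟨g, by rwa [dist_comm]⟩
      choose t ht using hex
      refine ⟨t, ?_⟩
      have hdiam : Metric.diam (minCenter Fol x) ≤ 2 * dist w z := by
        refine Metric.diam_le_of_forall_dist_le (by positivity) fun p hp q hq => ?_
        have h1 : dist p z ≤ dist w z := (isMaxOn_iff.1 hwmax) p hp
        have h2 : dist q z ≤ dist w z := (isMaxOn_iff.1 hwmax) q hq
        calc dist p q ≤ dist p z + dist q z := dist_triangle_right p q z
          _ ≤ 2 * dist w z := by linarith
      have hlim : dist w z ≤ Filter.liminf (fun n => dist ((t n) • y) z) Filter.atTop := by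
        rw [Filter.liminf_eq]
        refine le_of_forall_pos_le_add fun ε hε => ?_
        have hev : ∀ᶠ n : ℕ in Filter.atTop, 1/((n:ℝ)+1) ≤ ε :=
          (tendsto_one_div_add_atTop_nhds_zero_nat.eventually_lt_const hε).mono
            fun n h => h.le
        have hmem : dist w z - ε ∈
            {a : ℝ | ∀ᶠ n in Filter.atTop, a ≤ dist ((t n) • y) z} := by
          filter_upwards [hev] with n hn
          have h1 := dist_triangle w ((t n) • y) z
          have h2 : dist w ((t n) • y) ≤ ε := by
            rw [dist_comm]; exact (ht n).le.trans hn
          linarith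
        have hbdd : BddAbove {a : ℝ | ∀ᶠ n in Filter.atTop, a ≤ dist ((t n) • y) z} := by
          refine ⟨1 + dist w z, fun a ha => ?_⟩
          obtain ⟨n, hn⟩ := ha.exists
          have h1 := dist_triangle ((t n) • y) w z
          have h2 : (1:ℝ)/(n+1) ≤ 1 := by
            rw [div_le_one (by positivity)]
            have : (0:ℝ) ≤ (n:ℝ) := Nat.cast_nonneg n
            linarith
          have h3 := (ht n).le
          linarith
        have := le_csSup hbdd hmem
        linarith
      linarith
  · -- Part 2 : density of S_x when G is commutative
    intro comm
    obtain ⟨y, hyC, hyc⟩ := hS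
    have hinv : ∀ (g : G), ∀ w ∈ minCenter Fol x, g • w ∈ minCenter Fol x :=
      fun g w hw => minCenter_smul_mem hFol hcont hw g
    have horbS : (Set.range fun g : G => g • y) ⊆
        {p : X | p ∈ minCenter Fol x ∧ minCenter Fol p = minCenter Fol x} := by
      rintro _ ⟨g, rfl⟩
      refine ⟨hinv g y hyC, ?_⟩
      ext w
      constructor
      · intro hw
        have hkey : g⁻¹ • w ∈ minCenter Fol y := by
          intro U' hU' hmem
          have hU : IsOpen ((fun p : X => g⁻¹ • p) ⁻¹' U') := hU'.preimage (hcont g⁻¹)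
          have hwU : w ∈ (fun p : X => g⁻¹ • p) ⁻¹' U' := hmem
          have hpos := hw _ hU hwU
          have hsets : {h : G | h • (g • y) ∈ (fun p : X => g⁻¹ • p) ⁻¹' U'} =
              {h : G | h • y ∈ U'} := by
            ext h
            simp only [Set.mem_setOf_eq, Set.mem_preimage, smul_smul]
            rw [comm h g, inv_mul_cancel_left]
          rwa [hsets] at hpos
        rw [hyc] at hkey
        have := hinv g _ hkey
        rwa [smul_inv_smul] at this
      · intro hwC
        intro U hU hwU
        have h1 : g⁻¹ • w ∈ minCenter Fol y := by
          rw [hyc]; exact hinv g⁻¹ w hwC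
        have hV : IsOpen ((fun p : X => g • p) ⁻¹' U) := hU.preimage (hcont g)
        have hmem : g⁻¹ • w ∈ (fun p : X => g • p) ⁻¹' U := by
          have : g • g⁻¹ • w = w := smul_inv_smul g w
          simp only [Set.mem_preimage, this]
          exact hwU
        have hpos := h1 _ hV hmem
        have hsets : {h : G | h • y ∈ (fun p : X => g • p) ⁻¹' U} =
            {h : G | h • (g • y) ∈ U} := by
          ext h
          simp only [Set.mem_setOf_eq, Set.mem_preimage, smul_smul]
          rw [comm g h]
        rwa [hsets] at hpos
    have h1 : minCenter Fol x ⊆ closure (Set.range fun g : G => g • y) := by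
      rw [← hyc]; exact minCenter_subset_closure_orbit Fol y
    exact h1.trans (closure_mono horbS)
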